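/- Let a, σ1, σ2, λ2, λ3 be real numbers with σ1 > 0, σ2 > 0, λ2 > 0, λ3 > 0, and a ≠ 0. Define SI = λ3(a²/σ2² + 1/σ1²)/a² + λ3/σ2² and SII = λ2/σ1² + (a²λ2 + λ3)/(a²σ1²). Then SI = SII if and only if σ2² = (λ3/λ2)·σ1². -/

import Mathlib

/-- For the 3-node branch with equal modules, the traces of the two minimal EMPs
coincide exactly when `σ2² = (λ3/λ2)·σ1²`. -/
theorem stmt_9 (a σ1 σ2 lam2 lam3 SI SII : ℝ)
    (hσ1 : σ1 > 0) (hσ2 : σ2 > 0) (hlam2 : lam2 > 0) (hlam3 : lam3 > 0) (ha : a ≠ 0)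
    (hSI : SI = lam3 * (a^2 / σ2^2 + 1 / σ1^2) / a^2 + lam3 / σ2^2)
    (hSII : SII = lam2 / σ1^2 + (a^2 * lam2 + lam3) / (a^2 * σ1^2)) :
    SI = SII ↔ σ2^2 = (lam3 / lam2) * σ1^2 := by
  subst hSI hSII
  have h1 : σ1 ≠ 0 := ne_of_gt hσ1
  have h2 : σ2 ≠ 0 := ne_of_gt hσ2
  have h3 : lam2 ≠ 0 := ne_of_gt hlam2
  constructor
  · intro h
    field_simp at h ⊢
    have key : (lam3 * σ1^2 - lam2 * σ2^2) * (2 * a^4 * σ1^4 * σ2^2) = 0 := by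
      linear_combination (a^2 * σ1^4 * σ2^2) * h
    have hf : (2 * a^4 * σ1^4 * σ2^2) ≠ 0 := by positivity
    have := mul_eq_zero.mp key
    rcases this with h0 | h0
    · linarith [sub_eq_zero.mp h0]
    · exact absurd h0 hf
  · intro h
    field_simp at h ⊢
    linear_combination (-2 * a^2) * h
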